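/- Let H be a finitely generated free group and let p be a prime. Then H is residually p-finite: the intersection ⋂_{i≥1} γ^p_i(H) of the lower F_p-linear central filtration is trivial. -/

import Mathlib

/-- The lower `𝔽_p`-linear central filtration: `γ^p_1(G) = G` and
`γ^p_{i+1}(G) = ⟨[γ^p_i(G), G], x^p : x ∈ γ^p_i(G)⟩`.
Here `lowerPCentralSeries p G i` is the paper's `γ^p_{i+1}(G)`. -/
def lowerPCentralSeries (p : ℕ) (G : Type*) [Group G] : ℕ → Subgroup G
  | 0 => ⊤
  | i + 1 =>
      ⁅lowerPCentralSeries p G i, (⊤ : Subgroup G)⁆ ⊔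
        Subgroup.closure {x : G | ∃ y ∈ lowerPCentralSeries p G i, x = y ^ p}



section Setup
variable {ι : Type*} (p n : ℕ)

/-- Words of length at most `n`. -/
abbrev RPF.W (ι : Type*) (n : ℕ) := {l : List ι // l.length ≤ n}

abbrev RPF.V (p : ℕ) (ι : Type*) (n : ℕ) := RPF.W ι n → ZMod p

abbrev RPF.R (p : ℕ) (ι : Type*) (n : ℕ) := Module.End (ZMod p) (RPF.V p ι n)

namespace RPF

noncomputable def Ne : V p ι n →ₗ[ZMod p] V p ι n := 0

open Classical in
/-- prepend-`x` operator -/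
noncomputable def N (x : ι) : R p ι n where
  toFun f := fun u => if u.val.head? = some x then f ⟨u.val.tail, u.val.length_tail ▸ le_trans (Nat.sub_le _ _) u.2⟩ else 0
  map_add' f g := by
    funext u
    by_cases h : u.val.head? = some x <;> simp [h]
  map_smul' c f := by
    funext u
    by_cases h : u.val.head? = some x <;> simp [h]

/-- The length filtration. -/
def Fil (i : ℕ) : Submodule (ZMod p) (R p ι n) where
  carrier := {A | ∀ (f : V p ι n) (u : W ι n), A f u ≠ 0 → ∃ w : W ι n, f w ≠ 0 ∧ w.val.length + i ≤ u.val.length}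
  add_mem' {A B} hA hB := by
    intro f u hfu
    have : A f u ≠ 0 ∨ B f u ≠ 0 := by
      by_contra h
      push_neg at h
      exact hfu (by simp [h.1, h.2])
    rcases this with h | h
    · exact hA f u h
    · exact hB f u h
  zero_mem' := by intro f u h; simp at h
  smul_mem' c A hA := by
    intro f u hfu
    apply hA f u
    intro h0
    exact hfu (by simp [h0])

variable {p n}

theorem Fil_mono {i j : ℕ} (hij : i ≤ j) : (Fil p n (ι := ι) j) ≤ Fil p n i := by
  intro A hA f u hfu
  obtain ⟨w, hw, hl⟩ := hA f u hfu
  exact ⟨w, hw, by omega⟩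

theorem mul_mem_fil {i j : ℕ} {A B : R p ι n} (hA : A ∈ Fil p n i) (hB : B ∈ Fil p n j) :
    A * B ∈ Fil p n (i + j) := by
  intro f u hfu
  obtain ⟨v, hv, hlv⟩ := hA (B f) u hfu
  obtain ⟨w, hw, hlw⟩ := hB f v hv
  exact ⟨w, hw, by omega⟩

theorem pow_mem_fil {i : ℕ} {A : R p ι n} (hA : A ∈ Fil p n i) (k : ℕ) :
    A ^ (k + 1) ∈ Fil p n (i * (k + 1)) := by
  induction k with
  | zero => simpa using hA
  | succ k ih =>
    have := mul_mem_fil ih hA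
    rw [← pow_succ] at this
    rw [Nat.mul_succ]
    exact this

theorem fil_eq_zero {i : ℕ} {A : R p ι n} (hA : A ∈ Fil p n i) (hi : n + 1 ≤ i) : A = 0 := by
  ext f u
  by_contra h
  obtain ⟨w, _, hl⟩ := hA f u h
  have := u.2
  omega

theorem N_mem_fil (x : ι) : (N p n x : R p ι n) ∈ Fil p n 1 := by
  intro f u hfu
  rw [N] at hfu
  dsimp at hfu
  split_ifs at hfu with h
  · refine ⟨_, hfu, ?_⟩
    rcases u with ⟨(_ | ⟨a, l⟩), hu⟩
    · simp at h
    · simp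
  · simp at hfu

theorem N_nilpotent (x : ι) : IsNilpotent (N p n x : R p ι n) :=
  ⟨n + 1, fil_eq_zero (by simpa using pow_mem_fil (N_mem_fil x) n) le_rfl⟩

end RPF
end Setup
section Setup
variable {ι : Type*} (p n : ℕ)
namespace RPF

open Classical in
noncomputable def de : V p ι n := fun u => if u.val = [] then 1 else 0

theorem algebraMap_inj : Function.Injective (algebraMap (ZMod p) (R p ι n)) := by
  intro a b hab
  have := congrFun (congrArg (fun (A : R p ι n) => A (de p n)) hab) ⟨[], by simp⟩
  simpa [Module.algebraMap_end_apply, de] using this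

theorem charP : CharP (R p ι n) p :=
  charP_of_injective_algebraMap (algebraMap_inj p n) p

variable {p n}

/-- inverse of a unit congruent to 1 mod Fil j is also congruent to 1 mod Fil j -/
theorem inv_sub_one_mem {j : ℕ} (hj : 1 ≤ j) {x : (R p ι n)ˣ} (hx : ((x : R p ι n) - 1) ∈ Fil p n j) :
    ((↑x⁻¹ : R p ι n) - 1) ∈ Fil p n j := by
  set a : R p ι n := (x : R p ι n) - 1 with ha
  have hna : (-a) ∈ Fil p n j := neg_mem hx
  have hS : (x : R p ι n) * (∑ k ∈ Finset.range (n + 2), (-a) ^ k) = 1 := by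
    have hgeom := mul_geom_sum (-a) (n + 2)
    have hnil : (-a) ^ (n + 2) = 0 :=
      fil_eq_zero (Fil_mono (by nlinarith) (pow_mem_fil hna (n + 1))) le_rfl
    have hx1 : (x : R p ι n) = 1 + a := by rw [ha]; abel
    have : (-(1 + a)) * ∑ k ∈ Finset.range (n + 2), (-a) ^ k = -1 := by
      rw [show (-(1 + a) : R p ι n) = -a - 1 by abel] at *
      rw [hgeom, hnil, zero_sub]
    rw [hx1, ← neg_inj, ← neg_mul, this]
  have hinv : (↑x⁻¹ : R p ι n) = ∑ k ∈ Finset.range (n + 2), (-a) ^ k := by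
    have h2 : (↑x⁻¹ : R p ι n) = ↑x⁻¹ * ((x : R p ι n) * ∑ k ∈ Finset.range (n + 2), (-a) ^ k) := by
      rw [hS, mul_one]
    rwa [← mul_assoc, Units.inv_mul, one_mul] at h2
  rw [hinv, Finset.sum_range_succ' _ (n + 1)]
  simp only [pow_zero, add_sub_cancel_right]
  refine Submodule.sum_mem _ fun k _ => ?_
  exact Fil_mono (Nat.le_mul_of_pos_right j (by omega)) (pow_mem_fil hna k)

variable (p n) in
/-- The congruence subgroups: `Gam i = {x | x ≡ 1 mod Fil (i+1)}`. -/
noncomputable def Gam (i : ℕ) : Subgroup (R p ι n)ˣ where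
  carrier := {x | ((x : R p ι n) - 1) ∈ Fil p n (i + 1)}
  one_mem' := by simp
  mul_mem' {x y} hx hy := by
    simp only [Set.mem_setOf_eq, Units.val_mul] at *
    have hkey : ((x : R p ι n) * (y : R p ι n) - 1)
        = ((x : R p ι n) - 1) * ((y : R p ι n) - 1) + ((x : R p ι n) - 1) + ((y : R p ι n) - 1) := by
      simp only [mul_sub, sub_mul, mul_one, one_mul]
      abel
    rw [hkey]
    exact add_mem (add_mem (Fil_mono (by omega) (mul_mem_fil hx hy)) hx) hy
  inv_mem' {x} hx := inv_sub_one_mem (by omega) hx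

theorem mem_Gam {i : ℕ} {x : (R p ι n)ˣ} : x ∈ Gam p n i ↔ ((x : R p ι n) - 1) ∈ Fil p n (i + 1) :=
  Iff.rfl

theorem commutator_mem_Gam {i j : ℕ} {x y : (R p ι n)ˣ} (hx : x ∈ Gam p n i) (hy : y ∈ Gam p n j) :
    x * y * x⁻¹ * y⁻¹ ∈ Gam p n (i + j + 1) := by
  rw [mem_Gam] at hx hy ⊢
  set X := (x : R p ι n)
  set Y := (y : R p ι n)
  set Xi := (↑x⁻¹ : R p ι n)
  set Yi := (↑y⁻¹ : R p ι n)
  have hXXi : X * Xi = 1 := x.mul_inv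
  have hYYi : Y * Yi = 1 := y.mul_inv
  set a : R p ι n := X - 1 with hadef
  set b : R p ι n := Y - 1 with hbdef
  set a' : R p ι n := Xi - 1 with ha'def
  set b' : R p ι n := Yi - 1 with hb'def
  have ha' : a' ∈ Fil p n (i + 1) := inv_sub_one_mem (by omega) hx
  have hb' : b' ∈ Fil p n (j + 1) := inv_sub_one_mem (by omega) hy
  have key : ((↑(x * y * x⁻¹ * y⁻¹) : R p ι n)) - 1 = (X * Y - Y * X) * (Xi * Yi) := by
    push_cast
    rw [sub_mul]
    simp only [mul_assoc]
    rw [← mul_assoc X Xi Yi, hXXi, one_mul, hYYi]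
  have hcomm : X * Y - Y * X = a * b - b * a := by
    have hX : X = a + 1 := by rw [hadef]; abel
    have hY : Y = b + 1 := by rw [hbdef]; abel
    rw [hX, hY]
    noncomm_ring
  have hXiYi : Xi * Yi = 1 + (a' + b' + a' * b') := by
    have hXi : Xi = a' + 1 := by rw [ha'def]; abel
    have hYi : Yi = b' + 1 := by rw [hb'def]; abel
    rw [hXi, hYi]
    noncomm_ring
  rw [key, hcomm, hXiYi]
  have hc : a * b - b * a ∈ Fil p n (i + j + 2) := by
    have h1 : a * b ∈ Fil p n (i + j + 2) := by
      have := mul_mem_fil hx hy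
      exact Fil_mono (by omega) this
    have h2 : b * a ∈ Fil p n (i + j + 2) := by
      have := mul_mem_fil hy hx
      exact Fil_mono (by omega) this
    exact sub_mem h1 h2
  have hd : a' + b' + a' * b' ∈ Fil p n 0 := by
    refine add_mem (add_mem (Fil_mono (by omega) ha') (Fil_mono (by omega) hb')) ?_
    exact Fil_mono (by omega) (mul_mem_fil ha' hb')
  rw [mul_add, mul_one]
  exact add_mem hc (by simpa using mul_mem_fil hc hd)

theorem pow_mem_Gam (hp : p.Prime) {i : ℕ} {x : (R p ι n)ˣ} (hx : x ∈ Gam p n i) :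
    x ^ p ∈ Gam p n (i + 1) := by
  haveI : Fact p.Prime := ⟨hp⟩
  haveI : CharP (R p ι n) p := charP p n
  rw [mem_Gam] at hx ⊢
  set a : R p ι n := (x : R p ι n) - 1 with hadef
  have hX : (x : R p ι n) = a + 1 := by rw [hadef]; abel
  have key : ((↑(x ^ p) : R p ι n)) - 1 = a ^ p := by
    push_cast
    rw [hX, add_pow_char_of_commute p (Commute.one_right a), one_pow, add_sub_cancel_right]
  rw [key]
  have hp2 : 2 ≤ p := hp.two_le
  have := pow_mem_fil hx (p - 1)
  have hpe : p - 1 + 1 = p := by omega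
  rw [hpe] at this
  exact Fil_mono (by nlinarith) this

end RPF
end Setup
section Part3
variable {ι : Type*} (p n : ℕ)
namespace RPF

noncomputable def unitN (x : ι) : (R p ι n)ˣ :=
  (IsNilpotent.isUnit_one_add (N_nilpotent (p := p) (n := n) x)).unit

theorem unitN_val (x : ι) : (unitN p n x : R p ι n) = 1 + N p n x :=
  IsUnit.unit_spec _

noncomputable def Phi : FreeGroup ι →* (R p ι n)ˣ :=
  FreeGroup.lift fun x => unitN p n x

theorem Phi_of (x : ι) : Phi p n (FreeGroup.of x) = unitN p n x :=
  FreeGroup.lift_apply_of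

variable {p n}

theorem unitN_mem_Gam0 (x : ι) : unitN p n x ∈ Gam p n 0 := by
  rw [mem_Gam, unitN_val]
  simpa using N_mem_fil (p := p) (n := n) x

theorem Phi_mem_Gam0 (g : FreeGroup ι) : Phi p n g ∈ Gam p n 0 := by
  induction g using FreeGroup.induction_on with
  | C1 => simpa using one_mem (Gam p n 0)
  | of x => rw [Phi_of]; exact unitN_mem_Gam0 x
  | inv_of x _ => rw [map_inv]; exact inv_mem (by rw [Phi_of]; exact unitN_mem_Gam0 x)
  | mul x y hx hy => rw [map_mul]; exact mul_mem hx hy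

theorem map_lowerPCentralSeries (hp : p.Prime) :
    ∀ i, Subgroup.map (Phi p n (ι := ι)) (lowerPCentralSeries p (FreeGroup ι) i) ≤ Gam p n i := by
  intro i
  induction i with
  | zero =>
    rintro _ ⟨g, -, rfl⟩
    exact Phi_mem_Gam0 g
  | succ i ih =>
    rw [lowerPCentralSeries, Subgroup.map_sup, sup_le_iff]
    constructor
    · rw [Subgroup.map_commutator]
      rw [Subgroup.commutator_le]
      intro g1 hg1 g2 hg2
      have h1 : g1 ∈ Gam p n i := ih hg1
      have h2 : g2 ∈ Gam p n 0 := by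
        obtain ⟨g, -, rfl⟩ := hg2
        exact Phi_mem_Gam0 g
      have := commutator_mem_Gam h1 h2
      rwa [commutatorElement_def]
    · rw [MonoidHom.map_closure]
      rw [Subgroup.closure_le]
      rintro _ ⟨g, hg, rfl⟩
      obtain ⟨y, hy, rfl⟩ := hg
      simp only [SetLike.mem_coe, map_pow]
      exact pow_mem_Gam hp (ih ⟨y, hy, rfl⟩)

theorem Phi_eq_one (hp : p.Prime) {h : FreeGroup ι}
    (hh : h ∈ lowerPCentralSeries p (FreeGroup ι) (n + 1)) : Phi p n h = 1 := by
  have hmem : Phi p n h ∈ Gam p n (n + 1) :=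
    map_lowerPCentralSeries hp (n + 1) ⟨h, hh, rfl⟩
  rw [mem_Gam] at hmem
  have : ((Phi p n h : (R p ι n)ˣ) : R p ι n) - 1 = 0 := fil_eq_zero hmem (by omega)
  ext1
  rw [sub_eq_zero] at this
  simpa using this

end RPF
end Part3
section Part4
open List
variable {ι : Type*} (p n : ℕ)
namespace RPF

open Classical in
theorem N_apply (x : ι) (f : V p ι n) (u : W ι n) :
    (N p n x f) u = if u.val.head? = some x
      then f ⟨u.val.tail, u.val.length_tail ▸ le_trans (Nat.sub_le _ _) u.2⟩ else 0 := rfl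

open Classical in
theorem Npow_apply (x : ι) (k : ℕ) (f : V p ι n) :
    ∀ u : W ι n, ((N p n x ^ k) f) u =
      if List.replicate k x <+: u.val
      then f ⟨u.val.drop k, le_trans (List.length_drop (i := k) (l := u.val) ▸ Nat.sub_le _ _) u.2⟩
      else 0 := by
  induction k with
  | zero =>
    intro u
    rw [pow_zero, if_pos (by simp)]
    exact congrArg f (Subtype.ext (by simp))
  | succ k ih =>
    rintro ⟨ul, hul⟩
    rw [pow_succ']
    show (N p n x ((N p n x ^ k) f)) ⟨ul, hul⟩ = _
    rw [N_apply]
    cases ul with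
    | nil =>
      rw [if_neg (by simp), if_neg]
      intro hcon
      have := hcon.length_le
      simp at this
    | cons a l =>
      by_cases hax : a = x
      · subst hax
        simp only [List.head?_cons, List.tail_cons]
        rw [if_pos trivial, ih]
        by_cases hpre : List.replicate k a <+: l
        · rw [if_pos hpre, if_pos (by rw [List.replicate_succ]; exact (List.cons_prefix_cons).mpr ⟨rfl, hpre⟩)]
          exact congrArg f (Subtype.ext (by simp))
        · rw [if_neg hpre, if_neg]
          rw [List.replicate_succ]
          intro hcon
          exact hpre ((List.cons_prefix_cons).mp hcon).2
      · simp only [List.head?_cons, List.tail_cons]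
        simp only [Option.some.injEq, hax, ↓reduceIte]
        rw [if_neg]
        rw [List.replicate_succ]
        intro hcon
        exact hax ((List.cons_prefix_cons).mp hcon).1.symm

end RPF
end Part4
section Part5
open List
namespace RPF
variable {α : Type*}

open Classical in
noncomputable def nruns : List α → ℕ
  | [] => 0
  | [_] => 1
  | a :: b :: l => (if a = b then 0 else 1) + nruns (b :: l)

theorem nruns_cons_cons_same (a : α) (l : List α) : nruns (a :: a :: l) = nruns (a :: l) := by
  rw [nruns, if_pos rfl, zero_add]

open Classical in
theorem nruns_cons_le (a : α) (l : List α) : nruns (a :: l) ≤ 1 + nruns l := by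
  cases l with
  | nil => simp [nruns]
  | cons b m =>
    rw [nruns]
    have : (if a = b then 0 else 1) ≤ 1 := by split_ifs <;> omega
    omega

theorem nruns_replicate_append_le (k : ℕ) (x : α) (l : List α) :
    nruns (replicate k x ++ l) ≤ 1 + nruns l := by
  induction k with
  | zero => simpa using Nat.le_add_left _ 1
  | succ k ih =>
    cases k with
    | zero => simpa using nruns_cons_le x l
    | succ k' =>
      have heq : replicate (k' + 1 + 1) x ++ l = x :: x :: (replicate k' x ++ l) := by
        simp [List.replicate_succ, List.cons_append]
      rw [heq, nruns_cons_cons_same]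
      have heq2 : x :: (replicate k' x ++ l) = replicate (k' + 1) x ++ l := by
        simp [List.replicate_succ, List.cons_append]
      rw [heq2]
      exact ih

theorem nruns_replicate_append_eq (k : ℕ) (x : α) (l : List α) (hk : 1 ≤ k)
    (hl : ∀ y ∈ l.head?, y ≠ x) : nruns (replicate k x ++ l) = 1 + nruns l := by
  induction k with
  | zero => omega
  | succ k ih =>
    cases k with
    | zero =>
      simp only [List.replicate_succ, List.replicate_zero, List.nil_append, List.cons_append,
        List.singleton_append]
      cases l with
      | nil => simp [nruns]
      | cons b m =>
        rw [nruns, if_neg (fun h => hl b rfl h.symm)]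
      
    | succ k' =>
      have heq : replicate (k' + 1 + 1) x ++ l = x :: (replicate (k' + 1) x ++ l) := by
        simp [List.replicate_succ, List.cons_append]
      rw [heq]
      have heq2 : x :: (replicate (k' + 1) x ++ l) = x :: x :: (replicate k' x ++ l) := by
        simp [List.replicate_succ, List.cons_append]
      rw [heq2, nruns_cons_cons_same]
      have heq3 : x :: (replicate k' x ++ l) = replicate (k' + 1) x ++ l := by
        simp [List.replicate_succ, List.cons_append]
      rw [heq3]
      exact ih (by omega)

/-- `rword ds xs = x₁^{d₁} x₂^{d₂} ⋯` -/
def rword (ds : List ℕ) (xs : List α) : List α := (List.zipWith List.replicate ds xs).flatten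

@[simp] theorem rword_nil (ds : List ℕ) : rword ds ([] : List α) = [] := by
  cases ds <;> rfl

@[simp] theorem rword_nil' (xs : List α) : rword [] xs = [] := by
  cases xs <;> rfl

theorem rword_cons (d : ℕ) (ds : List ℕ) (x : α) (xs : List α) :
    rword (d :: ds) (x :: xs) = replicate d x ++ rword ds xs := rfl

theorem head?_rword (d : ℕ) (ds : List ℕ) (x : α) (xs : List α) (hd : 1 ≤ d) :
    (rword (d :: ds) (x :: xs)).head? = some x := by
  rw [rword_cons]
  cases d with
  | zero => omega
  | succ d' => simp [List.replicate_succ]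

theorem nruns_rword_eq (xs : List α) : ∀ ds : List ℕ, Chain' (· ≠ ·) xs →
    ds.length = xs.length → (∀ d ∈ ds, 1 ≤ d) → nruns (rword ds xs) = xs.length := by
  induction xs with
  | nil => intro ds _ _ _; simp [nruns]
  | cons x xs' ih =>
    rintro (_ | ⟨d, ds'⟩) hch hlen hpos
    · simp at hlen
    · rw [rword_cons]
      have hch' := (List.isChain_cons.mp hch)
      rw [nruns_replicate_append_eq d x _ (hpos d (by simp)) ?_]
      · rw [ih ds' hch'.2 (by simpa using hlen) (fun d hd => hpos d (by simp [hd]))]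
        simp only [List.length_cons]
        omega
      · intro y hy
        cases xs' with
        | nil => simp at hy
        | cons x2 xs'' =>
          rcases ds' with _ | ⟨d2, ds''⟩
          · simp at hlen
          · rw [head?_rword d2 ds'' x2 xs'' (hpos d2 (by simp))] at hy
            have := hch'.1 x2 (by simp)
            simp only [Option.mem_def, Option.some.injEq] at hy
            subst hy
            exact fun h => this h.symm

open Classical in
theorem nruns_rword_le (xs : List α) : ∀ ds : List ℕ, ds.length = xs.length →
    nruns (rword ds xs) ≤ ds.countP (fun d => decide (d ≠ 0)) := by
  induction xs with
  | nil => intro ds _; simp [nruns]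
  | cons x xs' ih =>
    rintro (_ | ⟨d, ds'⟩) hlen
    · simp at hlen
    · rw [rword_cons]
      by_cases hd : d = 0
      · subst hd
        simp only [List.replicate_zero, List.nil_append]
        calc nruns (rword ds' xs') ≤ ds'.countP (fun d => decide (d ≠ 0)) :=
              ih ds' (by simpa using hlen)
          _ ≤ _ := by rw [List.countP_cons]; omega
      · calc nruns (replicate d x ++ rword ds' xs') ≤ 1 + nruns (rword ds' xs') :=
              nruns_replicate_append_le _ _ _
          _ ≤ 1 + ds'.countP (fun d => decide (d ≠ 0)) := by
              have := ih ds' (by simpa using hlen); omega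
          _ ≤ _ := by rw [List.countP_cons, if_pos (by simpa using hd)]; omega

theorem cancel_replicate (x : α) : ∀ (d e : ℕ) (A B : List α),
    replicate d x ++ A = replicate e x ++ B → (∀ y ∈ A.head?, y ≠ x) → (∀ y ∈ B.head?, y ≠ x) →
    d = e ∧ A = B := by
  intro d
  induction d with
  | zero =>
    rintro (_ | e) A B heq hA hB
    · simpa using heq
    · exfalso
      simp only [List.replicate_zero, List.nil_append, List.replicate_succ, List.cons_append] at heq
      subst heq
      exact hA x rfl rfl
  | succ d ih =>
    rintro (_ | e) A B heq hA hB
    · exfalso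
      simp only [List.replicate_zero, List.nil_append, List.replicate_succ, List.cons_append] at heq
      subst heq
      exact hB x rfl rfl
    · simp only [List.replicate_succ, List.cons_append, List.cons.injEq, true_and] at heq
      obtain ⟨h1, h2⟩ := ih e A B heq hA hB
      exact ⟨by omega, h2⟩

theorem rword_eq_of_pos (xs : List α) : ∀ ds es : List ℕ, Chain' (· ≠ ·) xs →
    ds.length = xs.length → es.length = xs.length →
    (∀ d ∈ ds, 1 ≤ d) → (∀ e ∈ es, 1 ≤ e) →
    rword ds xs = rword es xs → ds = es := by
  induction xs with
  | nil =>
    intro ds es _ h1 h2 _ _ _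
    simp only [List.length_nil, List.length_eq_zero_iff] at h1 h2
    rw [h1, h2]
  | cons x xs' ih =>
    rintro (_ | ⟨d, ds'⟩) (_ | ⟨e, es'⟩) hch hl1 hl2 hd he heq <;>
      [skip; simp at hl1; simp at hl2; skip]
    · simp at hl1
    · rw [rword_cons, rword_cons] at heq
      have hhead : ∀ (fs : List ℕ), fs.length = xs'.length → (∀ f ∈ fs, 1 ≤ f) →
          ∀ y ∈ (rword fs xs').head?, y ≠ x := by
        intro fs hfl hfp y hy
        cases xs' with
        | nil => simp at hy
        | cons x2 xs'' =>
          rcases fs with _ | ⟨f, fs'⟩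
          · simp at hfl
          · rw [head?_rword f fs' x2 xs'' (hfp f (by simp))] at hy
            simp only [Option.mem_def, Option.some.injEq] at hy
            subst hy
            exact fun h => (List.isChain_cons.mp hch).1 x2 (by simp) h.symm
      obtain ⟨hde, heq'⟩ := cancel_replicate x d e _ _ heq
        (hhead ds' (by simpa using hl1) (fun f hf => hd f (by simp [hf])))
        (hhead es' (by simpa using hl2) (fun f hf => he f (by simp [hf])))
      have := ih ds' es' (List.isChain_cons.mp hch).2 (by simpa using hl1) (by simpa using hl2)
        (fun f hf => hd f (by simp [hf])) (fun f hf => he f (by simp [hf])) heq'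
      rw [hde, this]

open Classical in
theorem run_lemma (xs : List α) (ds es : List ℕ) (hch : Chain' (· ≠ ·) xs)
    (hl1 : ds.length = xs.length) (hl2 : es.length = xs.length)
    (hd : ∀ d ∈ ds, 1 ≤ d) (heq : rword ds xs = rword es xs) : ds = es := by
  have h1 : nruns (rword ds xs) = xs.length := nruns_rword_eq xs ds hch hl1 hd
  have h2 : nruns (rword es xs) ≤ es.countP (fun d => decide (d ≠ 0)) := nruns_rword_le xs es hl2
  have h3 : es.countP (fun d => decide (d ≠ 0)) ≤ es.length := List.countP_le_length
  rw [heq] at h1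
  have hcount : es.countP (fun d => decide (d ≠ 0)) = es.length := by omega
  have hepos : ∀ e ∈ es, 1 ≤ e := by
    intro e he
    have := List.countP_eq_length.mp hcount e he
    simp only [ne_eq, decide_not, Bool.not_eq_true', decide_eq_false_iff_not] at this
    omega
  exact rword_eq_of_pos xs ds es hch hl1 hl2 hd hepos heq

end RPF
end Part5
section Part6
open List Polynomial
variable {ι : Type*} (p n : ℕ)
namespace RPF

theorem coeff_one_mul_of_const0 {k : Type*} [CommRing k] {A B : Polynomial k}
    (hA : A.coeff 0 = 0) (hB : B.coeff 0 = 0) : (A * B).coeff 1 = 0 := by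
  rw [Polynomial.coeff_mul]
  rw [Finset.Nat.antidiagonal_succ]
  simp [hA, hB]

theorem constcoeff_pow_eq_zero {k : Type*} [CommRing k] {A : Polynomial k}
    (hA : A.coeff 0 = 0) {m : ℕ} (hm : 1 ≤ m) : (A ^ m).coeff 0 = 0 := by
  have : Polynomial.constantCoeff (A ^ m) = (Polynomial.constantCoeff A) ^ m := map_pow _ _ _
  rw [Polynomial.constantCoeff_apply] at this
  rw [this, Polynomial.constantCoeff_apply, hA, zero_pow (by omega)]

variable {p n}

theorem inv_aeval {M : R p ι n} (hM : M ∈ Fil p n 1) {w : (R p ι n)ˣ} {P : Polynomial (ZMod p)}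
    (hw : (w : R p ι n) = Polynomial.aeval M P) (hP0 : P.coeff 0 = 1) :
    ∃ Q : Polynomial (ZMod p), Q.coeff 0 = 1 ∧ Q.coeff 1 = -P.coeff 1 ∧
      ((w⁻¹ : (R p ι n)ˣ) : R p ι n) = Polynomial.aeval M Q := by
  set z : R p ι n := Polynomial.aeval M (P - 1) with hz
  obtain ⟨Pq, hPq⟩ : Polynomial.X ∣ (P - 1) :=
    Polynomial.X_dvd_iff.mpr (by simp [hP0])
  have hcomm : Commute M (Polynomial.aeval M Pq) := by
    have h1 : Commute (Polynomial.X : Polynomial (ZMod p)) Pq := mul_comm _ _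
    have := h1.map (Polynomial.aeval M)
    simpa using this
  have hMnil : M ^ (n + 2) = 0 :=
    fil_eq_zero (Fil_mono (by omega) (pow_mem_fil hM (n + 1))) le_rfl
  have hznil : z ^ (n + 2) = 0 := by
    rw [hz, hPq, map_mul, Polynomial.aeval_X, hcomm.mul_pow, hMnil, zero_mul]
  have hwz : (w : R p ι n) = 1 + z := by
    rw [hw, hz, map_sub, map_one]
    abel
  have hgeo : (w : R p ι n) * (∑ k ∈ Finset.range (n + 2), (-z) ^ k) = 1 := by
    have hgeom := mul_geom_sum (-z) (n + 2)
    have hnz : (-z) ^ (n + 2) = 0 := by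
      have h := neg_pow z (n + 2)
      rw [h, hznil, mul_zero]
    rw [hnz, zero_sub] at hgeom
    have : (-(1 + z) : R p ι n) = -z - 1 := by abel
    rw [hwz, ← neg_inj, ← neg_mul, this, hgeom]
  have hinv : ((w⁻¹ : (R p ι n)ˣ) : R p ι n) = ∑ k ∈ Finset.range (n + 2), (-z) ^ k := by
    have h2 : ((w⁻¹ : (R p ι n)ˣ) : R p ι n)
        = ↑w⁻¹ * ((w : R p ι n) * ∑ k ∈ Finset.range (n + 2), (-z) ^ k) := by
      rw [hgeo, mul_one]
    rwa [← mul_assoc, Units.inv_mul, one_mul] at h2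
  refine ⟨∑ k ∈ Finset.range (n + 2), (1 - P) ^ k, ?_, ?_, ?_⟩
  · rw [Polynomial.finset_sum_coeff]
    rw [Finset.sum_eq_single 0]
    · simp
    · intro t _ ht
      exact constcoeff_pow_eq_zero (by simp [hP0]) (by omega)
    · intro h
      simp at h
  · rw [Polynomial.finset_sum_coeff]
    rw [Finset.sum_eq_single 1]
    · simp [Polynomial.coeff_one]
    · intro t ht ht1
      rcases Nat.lt_or_ge t 2 with h2 | h2
      · interval_cases t
        · simp [Polynomial.coeff_one]
        · omega
      · have : (1 - P) ^ t = (1 - P) * (1 - P) ^ (t - 1) := by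
          rw [← pow_succ']
          congr 1
          omega
        rw [this]
        exact coeff_one_mul_of_const0 (by simp [hP0])
          (constcoeff_pow_eq_zero (by simp [hP0]) (by omega))
    · intro h
      simp at h
  · rw [hinv, map_sum]
    congr 1
    funext k
    rw [map_pow, map_sub, map_one]
    congr 1
    rw [hz, map_sub, map_one]
    abel

theorem unitN_pow_frobenius (hp : p.Prime) (x : ι) (v : ℕ) :
    ((unitN p n x : R p ι n)) ^ (p ^ v) = 1 + (N p n x) ^ (p ^ v) := by
  haveI : Fact p.Prime := ⟨hp⟩
  haveI : CharP (R p ι n) p := charP p n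
  rw [unitN_val, add_pow_char_pow_of_commute p v (Commute.one_left (N p n x)), one_pow]

end RPF
end Part6
section Part7
open List Polynomial
variable {ι : Type*} (p n : ℕ)
namespace RPF

structure Blk (p : ℕ) (ι : Type*) (n : ℕ) where
  x : ι
  q : ℕ
  hq : 1 ≤ q
  β : ZMod p
  u : (R p ι n)ˣ
  hu : ∃ P : Polynomial (ZMod p), P.coeff 0 = 1 ∧ P.coeff 1 = β ∧
    (u : R p ι n) = Polynomial.aeval ((N p n x) ^ q) P

def Au (B : List (Blk p ι n)) : R p ι n := (((B.map Blk.u).prod : (R p ι n)ˣ) : R p ι n)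

theorem Au_cons (b : Blk p ι n) (B : List (Blk p ι n)) :
    Au p n (b :: B) = (b.u : R p ι n) * Au p n B := by
  rw [Au, Au, List.map_cons, List.prod_cons, Units.val_mul]

def bword (B : List (Blk p ι n)) : List ι := (B.map fun b => List.replicate b.q b.x).flatten

theorem bword_cons (b : Blk p ι n) (B : List (Blk p ι n)) :
    bword p n (b :: B) = List.replicate b.q b.x ++ bword p n B := rfl

theorem bword_eq_rword (B : List (Blk p ι n)) :
    bword p n B = rword (B.map Blk.q) (B.map Blk.x) := by
  induction B with
  | nil => rfl
  | cons b B ih => rw [bword_cons, List.map_cons, List.map_cons, rword_cons, ih]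

theorem head?_bword (b : Blk p ι n) (B : List (Blk p ι n)) :
    (bword p n (b :: B)).head? = some b.x := by
  rcases hq : b.q with _ | q'
  · exact absurd (hq ▸ b.hq) (by omega)
  · rw [bword_cons, hq]
    simp [List.replicate_succ]

variable {p n}

theorem key (B : List (Blk p ι n)) (hch : B.Chain' (fun a b => a.x ≠ b.x)) :
    (∀ hlen : (bword p n B).length ≤ n,
      (Au p n B) (de p n) ⟨bword p n B, hlen⟩ = (B.map Blk.β).prod)
    ∧ ∀ u : W ι n, (Au p n B) (de p n) u ≠ 0 →
        ∃ es : List ℕ, es.length = B.length ∧ u.val = rword es (B.map Blk.x) := by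
  induction B with
  | nil =>
    constructor
    · intro hlen
      simp only [Au, List.map_nil, List.prod_nil, Units.val_one, Module.End.one_apply]
      rw [de]
      simp [bword]
    · intro u hu
      simp only [Au, List.map_nil, List.prod_nil, Units.val_one, Module.End.one_apply] at hu
      rw [de] at hu
      simp only [ne_eq, ite_eq_right_iff, not_forall] at hu
      exact ⟨[], rfl, by simpa using hu.1⟩
  | cons b B' ih =>
    obtain ⟨hh, hch'⟩ := List.isChain_cons.mp hch
    obtain ⟨P, hP0, hP1, hu⟩ := b.hu
    have IH := ih hch'
    have hAu : ∀ w : W ι n, (Au p n (b :: B')) (de p n) w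
        = ∑ t ∈ Finset.range (P.natDegree + 1),
            P.coeff t * ((N p n b.x ^ (b.q * t)) ((Au p n B') (de p n))) w := by
      intro w
      rw [Au_cons, Module.End.mul_apply, hu, aeval_eq_sum_range, LinearMap.sum_apply,
        Finset.sum_apply]
      refine Finset.sum_congr rfl fun t _ => ?_
      rw [LinearMap.smul_apply, Pi.smul_apply, smul_eq_mul, ← pow_mul]
    have hvzero : ∀ (hl : (bword p n (b :: B')).length ≤ n),
        (Au p n B') (de p n) ⟨bword p n (b :: B'), hl⟩ = 0 := by
      intro hl
      by_contra hv
      obtain ⟨es, hlen_es, hval⟩ := IH.2 _ hv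
      have hds := run_lemma ((b :: B').map Blk.x) ((b :: B').map Blk.q) (0 :: es)
        ((List.isChain_map _).mpr hch) (by simp) (by simp [hlen_es])
        (by rintro d hd; obtain ⟨bl, _, rfl⟩ := List.mem_map.mp hd; exact bl.hq)
        (by
          rw [← bword_eq_rword]
          show bword p n (b :: B') = rword (0 :: es) (b.x :: B'.map Blk.x)
          rw [rword_cons]
          simpa using hval)
      have : b.q = 0 := by
        have := congrArg List.head? hds
        simpa using this
      exact absurd (this ▸ b.hq) (by omega)
    constructor
    · intro hlen
      have hlen' : (bword p n B').length ≤ n := by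
        rw [bword_cons] at hlen
        simp only [List.length_append] at hlen
        omega
      rw [hAu]
      rw [Finset.sum_eq_single 1]
      · rw [hP1, Npow_apply]
        have hpre : List.replicate (b.q * 1) b.x <+: bword p n (b :: B') := by
          rw [mul_one, bword_cons]
          exact List.prefix_append _ _
        rw [if_pos hpre]
        have hdrop : (bword p n (b :: B')).drop (b.q * 1) = bword p n B' := by
          rw [mul_one, bword_cons]
          exact List.drop_left' (by simp)
        have harg : ∀ h1 : ((bword p n (b :: B')).drop (b.q * 1)).length ≤ n,
            (Au p n B') (de p n) ⟨(bword p n (b :: B')).drop (b.q * 1), h1⟩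
              = (B'.map Blk.β).prod := by
          intro h1
          have heq : (⟨(bword p n (b :: B')).drop (b.q * 1), h1⟩ : W ι n)
              = ⟨bword p n B', hlen'⟩ := Subtype.ext hdrop
          rw [heq, IH.1 hlen']
        rw [harg, List.map_cons, List.prod_cons]
      · intro t ht ht1
        rcases Nat.eq_zero_or_pos t with rfl | htpos
        · rw [mul_zero, pow_zero, Module.End.one_apply, hvzero hlen, mul_zero]
        · -- t ≥ 2
          have ht2 : 2 ≤ t := by omega
          obtain ⟨t', rfl⟩ : ∃ t', t = t' + 1 := ⟨t - 1, by omega⟩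
          have ht'1 : 1 ≤ t' := by omega
          rw [Npow_apply, if_neg, mul_zero]
          intro hcon
          have hcon2 : List.replicate (b.q * (t' + 1)) b.x <+: bword p n (b :: B') := hcon
          rw [bword_cons, Nat.mul_succ, Nat.add_comm (b.q * t') b.q, List.replicate_add] at hcon2
          have hpre2 : List.replicate (b.q * t') b.x <+: bword p n B' :=
            (List.prefix_append_right_inj _).mp hcon2
          obtain ⟨s, hs⟩ := hpre2
          have hqt' : 1 ≤ b.q * t' := Nat.mul_pos b.hq ht'1
          cases hB' : B' with
          | nil =>
            rw [hB'] at hs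
            have := congrArg List.length hs
            simp only [List.length_append, List.length_replicate] at this
            simp only [bword, List.map_nil, List.flatten_nil, List.length_nil] at this
            omega
          | cons b2 B'' =>
            have hhead : (bword p n B').head? = some b2.x := by rw [hB']; exact head?_bword _ _ _ _
            have hhead2 : (bword p n B').head? = some b.x := by
              rw [← hs]
              obtain ⟨m, hm⟩ : ∃ m, b.q * t' = m + 1 := ⟨b.q * t' - 1, by omega⟩
              rw [hm, List.replicate_succ]
              simp
            rw [hhead] at hhead2
            exact hh b2 (by rw [hB']; simp) (by injection hhead2 with h; exact h.symm)
      · intro h1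
        simp only [Finset.mem_range] at h1
        have : P.natDegree = 0 := by omega
        rw [Polynomial.coeff_eq_zero_of_natDegree_lt (by omega), zero_mul]
    · intro w hw
      rw [hAu w] at hw
      obtain ⟨t, _, hterm⟩ := Finset.exists_ne_zero_of_sum_ne_zero hw
      have hNterm : ((N p n b.x ^ (b.q * t)) ((Au p n B') (de p n))) w ≠ 0 :=
        fun h0 => hterm (by rw [h0, mul_zero])
      rw [Npow_apply] at hNterm
      split_ifs at hNterm with hpre
      · obtain ⟨es, hl, hval⟩ := IH.2 _ hNterm
        have hval' : w.val.drop (b.q * t) = rword es (List.map Blk.x B') := hval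
        obtain ⟨s, hs⟩ := hpre
        have hdrop : w.val.drop (b.q * t) = s := by
          have h2 : List.drop (b.q * t) (List.replicate (b.q * t) b.x ++ s) = s :=
            List.drop_left' (l₁ := List.replicate (b.q * t) b.x) (by simp)
          rw [hs] at h2
          exact h2
        refine ⟨b.q * t :: es, by simp [hl], ?_⟩
        rw [List.map_cons, rword_cons]
        have hrs : rword es (List.map Blk.x B') = s := hval'.symm.trans hdrop
        rw [hrs]
        exact hs.symm
      · exact absurd rfl hNterm

end RPF
end Part7
section Part8
open List
namespace RPF
variable {ι : Type*}

open Classical in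
noncomputable def blocks : List (ι × Bool) → List (ι × Bool × ℕ)
  | [] => []
  | (x, s) :: L =>
    match blocks L with
    | [] => [(x, s, 1)]
    | (y, c, k) :: rest =>
      if x = y ∧ s = c then (y, c, k + 1) :: rest else (x, s, 1) :: (y, c, k) :: rest

theorem blocks_nil : blocks ([] : List (ι × Bool)) = [] := rfl

open Classical in
theorem blocks_cons (x : ι) (s : Bool) (L : List (ι × Bool)) :
    blocks ((x, s) :: L) = match blocks L with
    | [] => [(x, s, 1)]
    | (y, c, k) :: rest =>
      if x = y ∧ s = c then (y, c, k + 1) :: rest else (x, s, 1) :: (y, c, k) :: rest := by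
  rw [blocks]

theorem blocks_pos : ∀ L : List (ι × Bool), ∀ t ∈ blocks L, 1 ≤ t.2.2 := by
  intro L
  induction L with
  | nil => intro t ht; simp [blocks_nil] at ht
  | cons a L ih =>
    obtain ⟨x, s⟩ := a
    intro t ht
    rw [blocks_cons] at ht
    rcases h : blocks L with _ | ⟨⟨y, c, k⟩, rest⟩
    · rw [h] at ht
      simp at ht
      simp [ht]
    · rw [h] at ht
      dsimp only at ht
      split_ifs at ht with hc
      · rcases List.mem_cons.mp ht with rfl | hmem
        · simp
        · exact ih t (h ▸ List.mem_cons_of_mem _ hmem)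
      · rcases List.mem_cons.mp ht with rfl | hmem
        · simp
        · exact ih t (h ▸ hmem)

theorem blocks_flatten : ∀ L : List (ι × Bool),
    ((blocks L).map fun t => List.replicate t.2.2 (t.1, t.2.1)).flatten = L := by
  intro L
  induction L with
  | nil => simp [blocks_nil]
  | cons a L ih =>
    obtain ⟨x, s⟩ := a
    rw [blocks_cons]
    rcases h : blocks L with _ | ⟨⟨y, c, k⟩, rest⟩
    · rw [h] at ih
      simp at ih
      simp [List.replicate_succ, ← ih]
    · rw [h] at ih
      dsimp only
      split_ifs with hc
      · obtain ⟨rfl, rfl⟩ := hc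
        simp only [List.map_cons, List.flatten_cons] at ih ⊢
        rw [List.replicate_succ, List.cons_append, ih]
      · simp only [List.map_cons, List.flatten_cons] at ih ⊢
        rw [ih]
        simp [List.replicate_succ]

theorem blocks_head : ∀ (L : List (ι × Bool)) (t : ι × Bool × ℕ) (rest : List (ι × Bool × ℕ)),
    blocks L = t :: rest → L.head? = some (t.1, t.2.1) := by
  intro L t rest h
  have hf := blocks_flatten L
  rw [h] at hf
  have hpos : 1 ≤ t.2.2 := blocks_pos L t (h ▸ List.mem_cons_self)
  obtain ⟨m, hm⟩ : ∃ m, t.2.2 = m + 1 := ⟨t.2.2 - 1, by omega⟩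
  rw [← hf]
  simp [hm, List.replicate_succ]

theorem blocks_letter_chain : ∀ L : List (ι × Bool),
    (∀ (A : List (ι × Bool)) (x : ι) (b : Bool) (B : List (ι × Bool)),
      L ≠ A ++ (x, b) :: (x, !b) :: B) →
    (blocks L).Chain' (fun a b => a.1 ≠ b.1) := by
  intro L
  induction L with
  | nil => intro _; simp [blocks_nil]; exact List.isChain_nil
  | cons a L ih =>
    obtain ⟨x, s⟩ := a
    intro hred
    have hred' : ∀ (A : List (ι × Bool)) (y : ι) (b : Bool) (B : List (ι × Bool)),
        L ≠ A ++ (y, b) :: (y, !b) :: B := by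
      intro A y b B hL
      exact hred ((x, s) :: A) y b B (by rw [hL]; rfl)
    have IH := ih hred'
    rw [blocks_cons]
    rcases h : blocks L with _ | ⟨⟨y, c, k⟩, rest⟩
    · simp; exact List.isChain_singleton _
    · rw [h] at IH
      dsimp only
      split_ifs with hc
      · exact List.isChain_cons.mpr ⟨(List.isChain_cons.mp IH).1, (List.isChain_cons.mp IH).2⟩
      · refine List.isChain_cons.mpr ⟨?_, IH⟩
        intro z hz
        simp only [List.head?_cons, Option.mem_def, Option.some.injEq] at hz
        subst hz
        intro hxy
        dsimp only at hxy
        subst hxy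
        have hsc : c = !s := by
          rcases Bool.eq_or_eq_not c s with rfl | rfl
          · exact absurd ⟨rfl, rfl⟩ hc
          · rfl
        have hL : L.head? = some (x, c) := blocks_head L (x, c, k) rest h
        cases L with
        | nil => simp at hL
        | cons a' L' =>
          simp only [List.head?_cons, Option.some.injEq] at hL
          subst hL
          exact hred [] x s L' (by rw [hsc]; simp)

def gb (t : ι × Bool × ℕ) : FreeGroup ι := (FreeGroup.mk [(t.1, t.2.1)]) ^ t.2.2

theorem blocks_prod : ∀ L : List (ι × Bool), ((blocks L).map gb).prod = FreeGroup.mk L := by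
  intro L
  induction L with
  | nil => rw [blocks_nil]; rfl
  | cons a L ih =>
    obtain ⟨x, s⟩ := a
    have hsplit : FreeGroup.mk ((x, s) :: L) = FreeGroup.mk [(x, s)] * FreeGroup.mk L := by
      rw [FreeGroup.mul_mk]
      rfl
    rw [blocks_cons, hsplit, ← ih]
    rcases h : blocks L with _ | ⟨⟨y, c, k⟩, rest⟩
    · simp [gb]
    · dsimp only
      split_ifs with hc
      · obtain ⟨rfl, rfl⟩ := hc
        simp only [List.map_cons, List.prod_cons, gb]
        rw [← mul_assoc]
        congr 1
        rw [pow_succ']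
      · simp [gb]

end RPF
end Part8
section Part9
open List Polynomial
namespace RPF
variable {ι : Type*} (p n : ℕ)

noncomputable def mkblk (hp : p.Prime) (t : ι × Bool × ℕ) : Blk p ι n where
  x := t.1
  q := p ^ (t.2.2.factorization p)
  hq := Nat.one_le_iff_ne_zero.mpr (pow_ne_zero _ hp.pos.ne')
  β := if t.2.1 then ((t.2.2 / p ^ (t.2.2.factorization p) : ℕ) : ZMod p)
       else -((t.2.2 / p ^ (t.2.2.factorization p) : ℕ) : ZMod p)
  u := if t.2.1 then (unitN p n t.1) ^ t.2.2 else ((unitN p n t.1) ^ t.2.2)⁻¹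
  hu := by
    set v := t.2.2.factorization p with hv
    set m := t.2.2 / p ^ v with hm
    have hk : p ^ v * m = t.2.2 := Nat.ordProj_mul_ordCompl_eq_self t.2.2 p
    have hfwd : ((unitN p n t.1 ^ t.2.2 : (R p ι n)ˣ) : R p ι n)
        = Polynomial.aeval ((N p n t.1) ^ (p ^ v)) (((1 + Polynomial.X : Polynomial (ZMod p))) ^ m) := by
      rw [Units.val_pow_eq_pow_val, ← hk, pow_mul, unitN_pow_frobenius hp]
      rw [map_pow, map_add, map_one, Polynomial.aeval_X]
    have hc0 : ((1 + Polynomial.X : Polynomial (ZMod p)) ^ m).coeff 0 = 1 := by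
      rw [Polynomial.coeff_one_add_X_pow]
      simp
    have hc1 : ((1 + Polynomial.X : Polynomial (ZMod p)) ^ m).coeff 1 = (m : ZMod p) := by
      rw [Polynomial.coeff_one_add_X_pow, Nat.choose_one_right]
    cases hb : t.2.1 with
    | true =>
      refine ⟨(1 + Polynomial.X) ^ m, hc0, ?_, ?_⟩
      · rw [hc1, if_pos rfl]
      · rw [if_pos rfl]
        exact hfwd
    | false =>
      have hM : (N p n t.1) ^ (p ^ v) ∈ Fil p n 1 := by
        obtain ⟨w, hw⟩ : ∃ w, p ^ v = w + 1 :=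
          ⟨p ^ v - 1, by have := Nat.one_le_iff_ne_zero.mpr (pow_ne_zero v hp.pos.ne'); omega⟩
        rw [hw]
        exact Fil_mono (by omega) (pow_mem_fil (N_mem_fil t.1) w)
      obtain ⟨Q, hQ0, hQ1, hQinv⟩ := inv_aeval hM hfwd hc0
      refine ⟨Q, hQ0, ?_, ?_⟩
      · rw [hQ1, hc1, if_neg (by simp)]
      · rw [if_neg (by simp)]
        exact hQinv

end RPF

theorem freeGroup_residually_p_finite' (ι : Type*) (p : ℕ) (hp : p.Prime) :
    (⨅ i, lowerPCentralSeries p (FreeGroup ι) i) = ⊥ := by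
  rw [eq_bot_iff]
  intro h hh
  rw [Subgroup.mem_bot]
  by_contra hne
  haveI : Fact p.Prime := ⟨hp⟩
  haveI : DecidableEq ι := Classical.decEq ι
  set L := FreeGroup.toWord h with hL
  have hLne : L ≠ [] := fun hnil => hne (FreeGroup.toWord_eq_nil_iff.mp (hL ▸ hnil))
  have hred : ∀ (A : List (ι × Bool)) (x : ι) (b : Bool) (B : List (ι × Bool)),
      L ≠ A ++ (x, b) :: (x, !b) :: B := by
    intro A x b B hEq
    exact FreeGroup.reduce.not (L₂ := A) (L₃ := B) (by rw [FreeGroup.reduce_toWord]; exact hEq)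
  set B₀ := RPF.blocks L with hB₀
  have hB₀ne : B₀ ≠ [] := by
    intro hBnil
    have := RPF.blocks_flatten L
    rw [← hB₀, hBnil] at this
    exact hLne (by simpa using this.symm)
  set n := ((B₀.map fun t => List.replicate (p ^ (t.2.2.factorization p)) t.1).flatten).length
    with hn
  set BL : List (RPF.Blk p ι n) := B₀.map (RPF.mkblk p n hp) with hBL
  have hch : BL.Chain' (fun a b => a.x ≠ b.x) := by
    rw [hBL]
    apply (List.isChain_map _).mpr
    exact List.IsChain.imp (fun a b hab => hab) (RPF.blocks_letter_chain L hred)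
  have hbw : RPF.bword p n BL
      = (B₀.map fun t => List.replicate (p ^ (t.2.2.factorization p)) t.1).flatten := by
    rw [RPF.bword, hBL, List.map_map]
    rfl
  have hlen : (RPF.bword p n BL).length ≤ n := by rw [hbw]
  have hAuPhi : RPF.Au p n BL = ((RPF.Phi p n h : (RPF.R p ι n)ˣ) : RPF.R p ι n) := by
    rw [RPF.Au, hBL, List.map_map]
    have hprod : (List.map RPF.gb B₀).prod = h := by
      rw [hB₀, RPF.blocks_prod, hL, FreeGroup.mk_toWord]
    have hmapu : List.map (RPF.Blk.u ∘ RPF.mkblk p n hp) B₀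
        = List.map (⇑(RPF.Phi p n)) (List.map RPF.gb B₀) := by
      rw [List.map_map]
      apply List.map_congr_left
      intro t _
      show (RPF.mkblk p n hp t).u = RPF.Phi p n (RPF.gb t)
      rw [RPF.gb, map_pow]
      rcases t with ⟨x, s, k⟩
      cases s
      · have hmk : FreeGroup.mk [(x, false)] = (FreeGroup.of x)⁻¹ := by
          rw [show (FreeGroup.of x : FreeGroup ι) = FreeGroup.mk [(x, true)] from rfl,
            FreeGroup.inv_mk]
          simp [FreeGroup.invRev]
        show ((RPF.unitN p n x) ^ k)⁻¹ = _
        rw [hmk, map_inv, RPF.Phi_of, ← inv_pow]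
      · show (RPF.unitN p n x) ^ k = _
        rw [show FreeGroup.mk [(x, true)] = (FreeGroup.of x : FreeGroup ι) from rfl, RPF.Phi_of]
    rw [hmapu, ← map_list_prod, hprod]
  have hone : RPF.Phi p n h = 1 := RPF.Phi_eq_one hp (Subgroup.mem_iInf.mp hh (n + 1))
  have hv := (RPF.key BL hch).1 hlen
  rw [hAuPhi, hone, Units.val_one, Module.End.one_apply] at hv
  have hω : RPF.bword p n BL ≠ [] := by
    rcases hBB : B₀ with _ | ⟨t, B'⟩
    · exact absurd hBB hB₀ne
    · rw [hBL, hBB, List.map_cons, RPF.bword_cons]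
      have h1 : 1 ≤ (RPF.mkblk p n hp t).q := (RPF.mkblk p n hp t).hq
      intro hcon
      have := congrArg List.length hcon
      simp only [List.length_append, List.length_replicate, List.length_nil] at this
      omega
  have hv0 : (0 : ZMod p) = (BL.map RPF.Blk.β).prod := by
    rw [← hv]
    simp only [RPF.de]
    rw [if_neg hω]
  have hβ : (BL.map RPF.Blk.β).prod ≠ 0 := by
    apply List.prod_ne_zero
    intro h0
    obtain ⟨bl, hbl, hbl0⟩ := List.mem_map.mp h0
    rw [hBL] at hbl
    obtain ⟨t, ht, rfl⟩ := List.mem_map.mp hbl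
    have hk1 : 1 ≤ t.2.2 := RPF.blocks_pos L t (hB₀ ▸ ht)
    have hnd : ¬ p ∣ (t.2.2 / p ^ (t.2.2.factorization p)) :=
      Nat.not_dvd_ordCompl hp (by omega)
    have hm0 : ((t.2.2 / p ^ (t.2.2.factorization p) : ℕ) : ZMod p) ≠ 0 := by
      rw [Ne, ZMod.natCast_eq_zero_iff]
      exact hnd
    rcases t with ⟨x, s, k⟩
    cases s
    · simp only [RPF.mkblk] at hbl0
      exact hm0 (neg_eq_zero.mp hbl0)
    · simp only [RPF.mkblk] at hbl0
      exact hm0 hbl0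
  exact hβ hv0.symm
end Part9

/-- A finitely generated free group is residually `p`-finite: the intersection of its
lower `𝔽_p`-linear central filtration is trivial. -/
theorem freeGroup_residually_p_finite (ι : Type*) [Finite ι] (p : ℕ) (hp : p.Prime) :
    (⨅ i, lowerPCentralSeries p (FreeGroup ι) i) = ⊥ :=
  freeGroup_residually_p_finite' ι p hp
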